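/- Let V and W be independent real random variables on a probability space such that V is Gamma-distributed with shape k_V > 0 and scale θ_V > 0 and W is Gamma-distributed with shape k_W > 0 and scale θ_W > 0. Then for every λ > 0, P(V/W ≥ λ) = (Γ(k_V + k_W)/(Γ(k_V)Γ(k_W))) · ∫₀^{ψ′} t^{k_W−1}(1−t)^{k_V−1} dt, where ψ′ = θ_V/(θ_V + λθ_W). -/

import Mathlib

open MeasureTheory ProbabilityTheory

open Set

/-- Density of a Gamma distribution with shape `k > 0` and scale `θ > 0`. -/
noncomputable def gammaDensity (k θ : ℝ) (x : ℝ) : ENNReal :=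
  if 0 < x then ENNReal.ofReal (x ^ (k - 1) * Real.exp (-x / θ) / (θ ^ k * Real.Gamma k)) else 0

lemma myLintegralImage {s : Set ℝ} {f f' : ℝ → ℝ} (hs : MeasurableSet s)
    (hf' : ∀ x ∈ s, HasDerivWithinAt f (f' x) s x) (hf : Set.InjOn f s) (g : ℝ → ENNReal) :
    ∫⁻ x in f '' s, g x = ∫⁻ x in s, ENNReal.ofReal |f' x| * g (f x) := by
  simpa only [ContinuousLinearMap.det_toSpanSingleton] using
    lintegral_image_eq_lintegral_abs_det_fderiv_mul volume hs
      (fun x hx => (hf' x hx).hasFDerivWithinAt) hf g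

lemma myGammaInt {a c : ℝ} (ha : 0 < a) (hc : 0 < c) :
    ∫⁻ x in Set.Ioi (0:ℝ), ENNReal.ofReal (x ^ (a-1) * Real.exp (-(c * x))) =
      ENNReal.ofReal (Real.Gamma a / c ^ a) := by
  have h1 := lintegral_gammaPDF_eq_one ha hc
  rw [← setLIntegral_univ, ← Set.Iic_union_Ioi (a := (0:ℝ)),
    lintegral_union measurableSet_Ioi (Set.Iic_disjoint_Ioi le_rfl)] at h1
  have h2 : ∫⁻ x in Set.Iic (0:ℝ), gammaPDF a c x = 0 := by
    have : ∫⁻ x in Set.Iic (0:ℝ), gammaPDF a c x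
        = ∫⁻ x in Set.Iio (0:ℝ), gammaPDF a c x := by
      refine (setLIntegral_congr ?_).symm
      exact Iio_ae_eq_Iic
    rw [this, setLIntegral_congr_fun measurableSet_Iio
      (fun x (hx : x < 0) ↦ gammaPDF_of_neg hx), lintegral_zero]
  rw [h2, zero_add] at h1
  have h3 : ∫⁻ x in Set.Ioi (0:ℝ), gammaPDF a c x
      = ENNReal.ofReal (c ^ a / Real.Gamma a) *
        ∫⁻ x in Set.Ioi (0:ℝ), ENNReal.ofReal (x ^ (a-1) * Real.exp (-(c * x))) := by
    rw [← lintegral_const_mul' _ _ ENNReal.ofReal_ne_top]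
    refine setLIntegral_congr_fun measurableSet_Ioi (fun x (hx : 0 < x) => ?_)
    rw [gammaPDF_of_nonneg hx.le, ← ENNReal.ofReal_mul (by positivity)]
    ring_nf
  rw [h3] at h1
  have hΓ : 0 < Real.Gamma a := Real.Gamma_pos_of_pos ha
  have hca : 0 < c ^ a := Real.rpow_pos_of_pos hc a
  have hne : ENNReal.ofReal (c ^ a / Real.Gamma a) ≠ 0 := by
    simp [ENNReal.ofReal_eq_zero, not_le, div_pos hca hΓ]
  have hnt : ENNReal.ofReal (c ^ a / Real.Gamma a) ≠ ⊤ := ENNReal.ofReal_ne_top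
  have := (ENNReal.eq_div_iff hne hnt).2 h1
  rw [this, one_div, ← ENNReal.ofReal_inv_of_pos (div_pos hca hΓ), inv_div]

lemma gammaDensity_measurable (k θ : ℝ) : Measurable (gammaDensity k θ) := by
  unfold gammaDensity
  refine Measurable.ite measurableSet_Ioi ?_ measurable_const
  refine Measurable.ennreal_ofReal ?_
  exact ((measurable_id'.pow_const _).mul ((measurable_id.neg.div_const θ).exp)).div_const _

/-- Complementary CDF of a ratio of independent Gamma random variables:
`P(V/W ≥ λ)` equals the regularized incomplete Beta function with swapped shape
parameters evaluated at `ψ′ = θ_V/(θ_V + λθ_W)`. -/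
theorem stmt15 {α : Type*} [MeasureSpace α] [IsProbabilityMeasure (ℙ : Measure α)]
    (V W : α → ℝ) (hV : Measurable V) (hW : Measurable W)
    (hindep : IndepFun V W)
    (kV θV kW θW : ℝ) (hkV : 0 < kV) (hθV : 0 < θV) (hkW : 0 < kW) (hθW : 0 < θW)
    (hVlaw : Measure.map V ℙ = volume.withDensity (gammaDensity kV θV))
    (hWlaw : Measure.map W ℙ = volume.withDensity (gammaDensity kW θW)) :
    ∀ lam : ℝ, 0 < lam →
      (ℙ {ω | lam ≤ V ω / W ω}).toReal =
        (Real.Gamma (kV + kW) / (Real.Gamma kV * Real.Gamma kW)) *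
          ∫ t in (0:ℝ)..(θV / (θV + lam * θW)), t ^ (kW - 1) * (1 - t) ^ (kV - 1) := by
  intro lam hlam
  have hΓV : 0 < Real.Gamma kV := Real.Gamma_pos_of_pos hkV
  have hΓW : 0 < Real.Gamma kW := Real.Gamma_pos_of_pos hkW
  have hΓa : 0 < Real.Gamma (kV + kW) := Real.Gamma_pos_of_pos (by linarith)
  set ψ : ℝ := θV / (θV + lam * θW) with hψdef
  have hden : 0 < θV + lam * θW := by positivity
  have hψ0 : 0 < ψ := div_pos hθV hden
  have hψ1 : ψ < 1 := by rw [hψdef, div_lt_one hden]; nlinarith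
  set μV : Measure ℝ := volume.withDensity (gammaDensity kV θV) with hμVdef
  set μW : Measure ℝ := volume.withDensity (gammaDensity kW θW) with hμWdef
  have hPV : IsProbabilityMeasure μV := hVlaw ▸ Measure.isProbabilityMeasure_map hV.aemeasurable
  have hPW : IsProbabilityMeasure μW := hWlaw ▸ Measure.isProbabilityMeasure_map hW.aemeasurable
  set S : Set (ℝ × ℝ) := {p | lam ≤ p.1 / p.2} with hSdef
  have hS : MeasurableSet S := measurableSet_le measurable_const (measurable_fst.div measurable_snd)
  set K : ℝ := 1 / (θV ^ kV * Real.Gamma kV * (θW ^ kW * Real.Gamma kW)) with hKdef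
  have hK : 0 < K := by
    rw [hKdef]
    have := Real.rpow_pos_of_pos hθV kV
    have := Real.rpow_pos_of_pos hθW kW
    positivity
  set C : ℝ := Real.Gamma (kV + kW) / (Real.Gamma kV * Real.Gamma kW) with hCdef
  have hC : 0 < C := by rw [hCdef]; positivity
  -- Step 1
  have h1 : ℙ {ω | lam ≤ V ω / W ω} = (μV.prod μW) S := by
    have hmap : Measure.map (fun ω => (V ω, W ω)) ℙ = μV.prod μW := by
      rw [← hVlaw, ← hWlaw]
      exact (indepFun_iff_map_prod_eq_prod_map_map hV.aemeasurable hW.aemeasurable).mp hindep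
    rw [← hmap, Measure.map_apply (hV.prodMk hW) hS]
    rfl
  -- Step 2+3+4
  have h2 : (μV.prod μW) S
      = ∫⁻ w in Ioi (0:ℝ), gammaDensity kW θW w * μV ((fun v => (v, w)) ⁻¹' S) := by
    rw [Measure.prod_apply_symm hS, hμWdef,
      lintegral_withDensity_eq_lintegral_mul volume (gammaDensity_measurable kW θW)
        (measurable_measure_prodMk_right (μ := μV) hS)]
    rw [← lintegral_indicator measurableSet_Ioi]
    congr 1
    funext w
    by_cases hw : 0 < w
    · simp only [indicator_of_mem (mem_Ioi.2 hw), Pi.mul_apply]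
    · rw [indicator_of_notMem (fun h : w ∈ Ioi 0 => hw (mem_Ioi.1 h))]
      simp only [Pi.mul_apply, gammaDensity, if_neg hw, zero_mul]
  -- Step 5: inner change of variables v = w * s
  have h5 : ∀ w ∈ Ioi (0:ℝ), gammaDensity kW θW w * μV ((fun v => (v, w)) ⁻¹' S)
      = ∫⁻ s in Ioi lam, ENNReal.ofReal
          (K * (s ^ (kV - 1) * (w ^ (kV + kW - 1) * Real.exp (-((s / θV + 1 / θW) * w))))) := by
    intro w hw
    rw [mem_Ioi] at hw
    have hpre : ((fun v => (v, w)) ⁻¹' S) = Ici (lam * w) := by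
      ext v
      simp only [hSdef, mem_preimage, mem_setOf_eq, mem_Ici]
      exact le_div_iff₀ hw
    have himg : (fun s : ℝ => w * s) '' Ioi lam = Ioi (lam * w) := by
      ext x
      constructor
      · rintro ⟨s, hs, rfl⟩
        rw [mem_Ioi] at hs ⊢
        calc lam * w < s * w := by exact mul_lt_mul_of_pos_right hs hw
        _ = w * s := mul_comm s w
      · intro hx
        rw [mem_Ioi] at hx
        exact ⟨x / w, by rw [mem_Ioi, lt_div_iff₀ hw]; linarith, by field_simp⟩
    have hder : ∀ s ∈ Ioi lam, HasDerivWithinAt (fun s : ℝ => w * s) w (Ioi lam) s :=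
      fun s _ => (by simpa using (hasDerivAt_id s).const_mul w : HasDerivAt (fun s : ℝ => w * s) w s).hasDerivWithinAt
    have hinj : InjOn (fun s : ℝ => w * s) (Ioi lam) :=
      fun a _ b _ hab => mul_left_cancel₀ hw.ne' hab
    rw [hpre, hμVdef, withDensity_apply _ measurableSet_Ici,
      ← setLIntegral_congr (Ioi_ae_eq_Ici (a := lam * w)), ← himg,
      myLintegralImage measurableSet_Ioi hder hinj]
    have hgd : gammaDensity kW θW w
        = ENNReal.ofReal (w ^ (kW - 1) * Real.exp (-w / θW) / (θW ^ kW * Real.Gamma kW)) :=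
      if_pos hw
    rw [hgd, ← lintegral_const_mul' _ _ ENNReal.ofReal_ne_top]
    refine setLIntegral_congr_fun measurableSet_Ioi (fun s hs => ?_)
    rw [mem_Ioi] at hs
    have hs0 : 0 < s := lt_trans hlam hs
    have hws : 0 < w * s := mul_pos hw hs0
    have hgd2 : gammaDensity kV θV (w * s)
        = ENNReal.ofReal ((w * s) ^ (kV - 1) * Real.exp (-(w * s) / θV) / (θV ^ kV * Real.Gamma kV)) :=
      if_pos hws
    rw [hgd2, abs_of_pos hw, ← ENNReal.ofReal_mul (by positivity),
      ← ENNReal.ofReal_mul (by positivity)]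
    congr 1
    have hθVk : 0 < θV ^ kV := Real.rpow_pos_of_pos hθV kV
    have hθWk : 0 < θW ^ kW := Real.rpow_pos_of_pos hθW kW
    have e1 : (w * s) ^ (kV - 1) = w ^ (kV - 1) * s ^ (kV - 1) := Real.mul_rpow hw.le hs0.le
    have e2 : w ^ (kV + kW - 1) = w * (w ^ (kV - 1) * w ^ (kW - 1)) := by
      rw [show kV + kW - 1 = 1 + ((kV - 1) + (kW - 1)) by ring, Real.rpow_add hw,
        Real.rpow_add hw, Real.rpow_one]
    have e3 : (-((s / θV + 1 / θW) * w)) = -w / θW + -(w * s) / θV := by field_simp; ring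
    rw [e1, e2, e3, Real.exp_add, hKdef]
    field_simp
  -- Step 6: Tonelli swap
  have hFmeas : Measurable (fun p : ℝ × ℝ => ENNReal.ofReal
      (K * (p.2 ^ (kV - 1) * (p.1 ^ (kV + kW - 1) * Real.exp (-((p.2 / θV + 1 / θW) * p.1)))))) := by
    refine Measurable.ennreal_ofReal (measurable_const.mul ?_)
    refine (measurable_snd.pow_const _).mul ((measurable_fst.pow_const _).mul ?_)
    exact (((measurable_snd.div_const θV).add_const (1 / θW)).mul measurable_fst).neg.exp
  have h6 : (∫⁻ w in Ioi (0:ℝ), ∫⁻ s in Ioi lam, ENNReal.ofReal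
        (K * (s ^ (kV - 1) * (w ^ (kV + kW - 1) * Real.exp (-((s / θV + 1 / θW) * w))))))
      = ∫⁻ s in Ioi lam, ∫⁻ w in Ioi (0:ℝ), ENNReal.ofReal
        (K * (s ^ (kV - 1) * (w ^ (kV + kW - 1) * Real.exp (-((s / θV + 1 / θW) * w))))) :=
    lintegral_lintegral_swap hFmeas.aemeasurable
  -- Step 7: inner Gamma integral
  have h7 : ∀ s ∈ Ioi lam, (∫⁻ w in Ioi (0:ℝ), ENNReal.ofReal
        (K * (s ^ (kV - 1) * (w ^ (kV + kW - 1) * Real.exp (-((s / θV + 1 / θW) * w))))))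
      = ENNReal.ofReal (K * s ^ (kV - 1) *
          (Real.Gamma (kV + kW) / (s / θV + 1 / θW) ^ (kV + kW))) := by
    intro s hs
    rw [mem_Ioi] at hs
    have hs0 : 0 < s := lt_trans hlam hs
    have hc : 0 < s / θV + 1 / θW := by positivity
    have hre : ∀ w : ℝ, K * (s ^ (kV - 1) * (w ^ (kV + kW - 1) * Real.exp (-((s / θV + 1 / θW) * w))))
        = (K * s ^ (kV - 1)) * (w ^ (kV + kW - 1) * Real.exp (-((s / θV + 1 / θW) * w))) := by
      intro w; ring
    simp_rw [hre, ENNReal.ofReal_mul (by positivity : (0:ℝ) ≤ K * s ^ (kV - 1))]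
    rw [lintegral_const_mul' _ _ ENNReal.ofReal_ne_top, myGammaInt (by linarith) hc,
      ← ENNReal.ofReal_mul (by positivity)]
  -- Step 8: substitution s = θV (1-t) / (θW t)
  have h8 : (∫⁻ s in Ioi lam, ENNReal.ofReal (K * s ^ (kV - 1) *
          (Real.Gamma (kV + kW) / (s / θV + 1 / θW) ^ (kV + kW))))
      = ∫⁻ t in Ioo (0:ℝ) ψ, ENNReal.ofReal (C * (t ^ (kW - 1) * (1 - t) ^ (kV - 1))) := by
    set g : ℝ → ℝ := fun t => θV * (1 - t) / (θW * t) with hg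
    have himg : g '' Ioo 0 ψ = Ioi lam := by
      ext s
      constructor
      · rintro ⟨t, ⟨ht0, htψ⟩, rfl⟩
        rw [hψdef, lt_div_iff₀ hden] at htψ
        rw [mem_Ioi]
        show lam < θV * (1 - t) / (θW * t)
        rw [lt_div_iff₀ (by positivity)]
        nlinarith
      · intro hs'
        rw [mem_Ioi] at hs'
        have hs0 : 0 < s := lt_trans hlam hs'
        have hsd : 0 < θV + s * θW := by positivity
        refine ⟨θV / (θV + s * θW), ⟨by positivity, ?_⟩, ?_⟩
        · rw [hψdef]
          exact div_lt_div_of_pos_left hθV hden (by nlinarith)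
        · show θV * (1 - θV / (θV + s * θW)) / (θW * (θV / (θV + s * θW))) = s
          field_simp
          ring
    have hder : ∀ t ∈ Ioo (0:ℝ) ψ, HasDerivWithinAt g (-(θV / (θW * t ^ 2))) (Ioo 0 ψ) t := by
      intro t ht
      have ht0 : 0 < t := ht.1
      have hd1 : HasDerivAt (fun t : ℝ => θV * (1 - t)) (θV * (0 - 1)) t :=
        ((hasDerivAt_const t (1:ℝ)).sub (hasDerivAt_id t)).const_mul θV
      have hd2 : HasDerivAt (fun t : ℝ => θW * t) θW t := by
        simpa using (hasDerivAt_id t).const_mul θW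
      have hd3 := hd1.div hd2 (by positivity)
      have heq : (θV * (0 - 1) * (θW * t) - θV * (1 - t) * θW) / (θW * t) ^ 2
          = -(θV / (θW * t ^ 2)) := by
        field_simp
        ring
      rw [heq] at hd3
      exact hd3.hasDerivWithinAt
    have hinj : InjOn g (Ioo 0 ψ) := by
      intro a ha b hb hab
      have ha0 : 0 < a := ha.1
      have hb0 : 0 < b := hb.1
      have hab' : θV * (1 - a) / (θW * a) = θV * (1 - b) / (θW * b) := hab
      field_simp at hab'
      have key : b * (θV * θW) = a * (θV * θW) := by linear_combination (θV * θW) * hab'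
      exact (mul_right_cancel₀ (by positivity : (θV * θW) ≠ 0) key).symm
    rw [← himg, myLintegralImage measurableSet_Ioo hder hinj]
    refine setLIntegral_congr_fun measurableSet_Ioo (fun t ht => ?_)
    obtain ⟨ht0, htψ⟩ := ht
    have ht1 : t < 1 := lt_trans htψ hψ1
    have h1t : 0 < 1 - t := by linarith
    have hWt : 0 < θW * t := by positivity
    rw [abs_neg, abs_of_pos (by positivity), ← ENNReal.ofReal_mul (by positivity)]
    congr 1
    have ec : g t / θV + 1 / θW = 1 / (θW * t) := by
      show θV * (1 - t) / (θW * t) / θV + 1 / θW = 1 / (θW * t)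
      field_simp
      ring
    rw [ec, one_div, Real.inv_rpow hWt.le]
    have e5 : (θW * t) ^ (kV + kW) = (θW * t) ^ (kV - 1) * ((θW * t) ^ (kW - 1) * (θW * t) ^ (2:ℕ)) := by
      conv_lhs => rw [show kV + kW = (kV - 1) + ((kW - 1) + 2) by ring]
      rw [Real.rpow_add hWt, Real.rpow_add hWt,
        show ((2:ℝ)) = ((2:ℕ):ℝ) by norm_num, Real.rpow_natCast]
    have e6 : g t ^ (kV - 1) = (θV ^ (kV - 1) * (1 - t) ^ (kV - 1)) / (θW ^ (kV - 1) * t ^ (kV - 1)) := by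
      show (θV * (1 - t) / (θW * t)) ^ (kV - 1) = _
      rw [Real.div_rpow (by positivity) hWt.le, Real.mul_rpow hθV.le h1t.le,
        Real.mul_rpow hθW.le ht0.le]
    have e7 : (θW * t) ^ (kW - 1) = θW ^ (kW - 1) * t ^ (kW - 1) := Real.mul_rpow hθW.le ht0.le
    have e8 : (θW * t) ^ (kV - 1) = θW ^ (kV - 1) * t ^ (kV - 1) := Real.mul_rpow hθW.le ht0.le
    have e9 : θV ^ kV = θV * θV ^ (kV - 1) := by
      conv_lhs => rw [show kV = 1 + (kV - 1) by ring]
      rw [Real.rpow_add hθV, Real.rpow_one]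
    have e10 : θW ^ kW = θW * θW ^ (kW - 1) := by
      conv_lhs => rw [show kW = 1 + (kW - 1) by ring]
      rw [Real.rpow_add hθW, Real.rpow_one]
    have p1 : 0 < θV ^ (kV - 1) := Real.rpow_pos_of_pos hθV _
    have p2 : 0 < θW ^ (kV - 1) := Real.rpow_pos_of_pos hθW _
    have p3 : 0 < θW ^ (kW - 1) := Real.rpow_pos_of_pos hθW _
    have p4 : 0 < t ^ (kV - 1) := Real.rpow_pos_of_pos ht0 _
    have p5 : 0 < t ^ (kW - 1) := Real.rpow_pos_of_pos ht0 _
    have p6 : 0 < (1 - t) ^ (kV - 1) := Real.rpow_pos_of_pos h1t _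
    rw [e5, e6, e7, e8, hKdef, hCdef, e9, e10]
    field_simp
  -- Step 9: back to the interval integral
  have hcont : ContinuousOn (fun t : ℝ => (1 - t) ^ (kV - 1)) (uIcc (0:ℝ) ψ) := by
    apply ContinuousOn.rpow_const (continuous_const.sub continuous_id).continuousOn
    intro t ht
    rw [uIcc_of_le hψ0.le] at ht
    refine Or.inl (sub_ne_zero_of_ne fun h => ?_)
    simp only [id_eq] at h
    linarith [ht.2, hψ1]
  have hii : IntervalIntegrable (fun t : ℝ => t ^ (kW - 1) * (1 - t) ^ (kV - 1)) volume 0 ψ :=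
    (intervalIntegral.intervalIntegrable_rpow' (by linarith)).mul_continuousOn hcont
  have hio : IntegrableOn (fun t : ℝ => t ^ (kW - 1) * (1 - t) ^ (kV - 1)) (Ioo 0 ψ) volume :=
    hii.1.mono_set Ioo_subset_Ioc_self
  have hnn : 0 ≤ᵐ[volume.restrict (Ioo (0:ℝ) ψ)] fun t : ℝ => t ^ (kW - 1) * (1 - t) ^ (kV - 1) := by
    refine (ae_restrict_iff' measurableSet_Ioo).2 (ae_of_all _ fun t ht => ?_)
    have ht0 : 0 < t := ht.1
    have h1t : 0 < 1 - t := by linarith [ht.2, hψ1]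
    positivity
  have h9 : (∫⁻ t in Ioo (0:ℝ) ψ, ENNReal.ofReal (C * (t ^ (kW - 1) * (1 - t) ^ (kV - 1))))
      = ENNReal.ofReal (C * ∫ t in (0:ℝ)..ψ, t ^ (kW - 1) * (1 - t) ^ (kV - 1)) := by
    simp_rw [ENNReal.ofReal_mul hC.le]
    rw [lintegral_const_mul' _ _ ENNReal.ofReal_ne_top,
      ← ofReal_integral_eq_lintegral_ofReal hio hnn, ← ENNReal.ofReal_mul hC.le,
      intervalIntegral.integral_of_le hψ0.le, setIntegral_congr_set Ioo_ae_eq_Ioc,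
      ENNReal.ofReal_mul hC.le]
  -- assemble
  have hfin : ℙ {ω | lam ≤ V ω / W ω}
      = ENNReal.ofReal (C * ∫ t in (0:ℝ)..ψ, t ^ (kW - 1) * (1 - t) ^ (kV - 1)) := by
    rw [h1, h2, setLIntegral_congr_fun measurableSet_Ioi h5, h6,
      setLIntegral_congr_fun measurableSet_Ioi h7, h8, h9]
  have hInn : 0 ≤ ∫ t in (0:ℝ)..ψ, t ^ (kW - 1) * (1 - t) ^ (kV - 1) := by
    refine intervalIntegral.integral_nonneg hψ0.le fun t ht => ?_
    exact mul_nonneg (Real.rpow_nonneg ht.1 _) (Real.rpow_nonneg (by linarith [ht.2, hψ1]) _)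
  rw [hfin, ENNReal.toReal_ofReal (by positivity)]
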